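/- Every commutative κ-algebra generated (as an algebra) by a set of idempotents is von Neumann regular. -/
import Mathlib

/-- If `c` is regular and `f` is idempotent (all commuting), then `f*c` is regular. -/
private lemma reg_mul_idem {A : Type*} [CommRing A] {f c : A} (hf : f * f = f)
    (hc : ∃ y, c * y * c = c) : ∃ y, (f * c) * y * (f * c) = f * c := by
  obtain ⟨y, hy⟩ := hc
  exact ⟨y, by rw [show f * c * y * (f * c) = (f * f) * (c * y * c) by ring, hf, hy]⟩

/-- Splitting lemma: if `e` is idempotent and `e*x`, `(1-e)*x` are regular, so is `x`. -/
private lemma reg_of_split {A : Type*} [CommRing A] {e x : A} (he : e * e = e)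
    (h1 : ∃ y, (e * x) * y * (e * x) = e * x)
    (h2 : ∃ y, ((1 - e) * x) * y * ((1 - e) * x) = (1 - e) * x) :
    ∃ y, x * y * x = x := by
  obtain ⟨y1, hy1⟩ := h1
  obtain ⟨y2, hy2⟩ := h2
  refine ⟨e * y1 + (1 - e) * y2, ?_⟩
  have h1' : e * (x * y1 * x) = e * x := by
    have : (e * e) * (x * y1 * x) = e * x := by
      rw [show e * e * (x * y1 * x) = (e * x) * y1 * (e * x) by ring, hy1]
    rwa [he] at this
  have h2' : (1 - e) * (x * y2 * x) = (1 - e) * x := by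
    have hi : (1 - e) * (1 - e) = 1 - e := by
      rw [mul_sub, mul_one, sub_mul, one_mul, he]; ring
    have : ((1 - e) * (1 - e)) * (x * y2 * x) = (1 - e) * x := by
      rw [show (1 - e) * (1 - e) * (x * y2 * x) = ((1 - e) * x) * y2 * ((1 - e) * x) by ring,
        hy2]
    rwa [hi] at this
  calc x * (e * y1 + (1 - e) * y2) * x
      = e * (x * y1 * x) + (1 - e) * (x * y2 * x) := by ring
    _ = e * x + (1 - e) * x := by rw [h1', h2']
    _ = x := by ring

/-- Substitution: if `f*f = f` and `f*e = f*c₀` with `c₀ ∈ adjoin κ T`, then for any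
`x ∈ adjoin κ (insert e T)` there is `c ∈ adjoin κ T` with `f*x = f*c`. -/
private lemma subst_lemma {κ A : Type*} [Field κ] [CommRing A] [Algebra κ A]
    (T : Set A) (e f c₀ : A) (hf : f * f = f) (hc₀ : c₀ ∈ Algebra.adjoin κ T)
    (hfe : f * e = f * c₀) :
    ∀ x ∈ Algebra.adjoin κ (insert e T), ∃ c ∈ Algebra.adjoin κ T, f * x = f * c := by
  intro x hx
  induction hx using Algebra.adjoin_induction with
  | mem a ha =>
    rcases ha with rfl | ha
    · exact ⟨c₀, hc₀, hfe⟩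
    · exact ⟨a, Algebra.subset_adjoin ha, rfl⟩
  | algebraMap r => exact ⟨algebraMap κ A r, Subalgebra.algebraMap_mem _ r, rfl⟩
  | add a b _ _ iha ihb =>
    obtain ⟨ca, hca, ha⟩ := iha
    obtain ⟨cb, hcb, hb⟩ := ihb
    exact ⟨ca + cb, add_mem hca hcb, by rw [mul_add, ha, hb, mul_add]⟩
  | mul a b _ _ iha ihb =>
    obtain ⟨ca, hca, ha⟩ := iha
    obtain ⟨cb, hcb, hb⟩ := ihb
    refine ⟨ca * cb, mul_mem hca hcb, ?_⟩
    calc f * (a * b) = (f * f) * (a * b) := by rw [hf]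
      _ = (f * a) * (f * b) := by ring
      _ = (f * ca) * (f * cb) := by rw [ha, hb]
      _ = (f * f) * (ca * cb) := by ring
      _ = f * (ca * cb) := by rw [hf]

private lemma reg_of_finset_adjoin {κ A : Type*} [Field κ] [CommRing A] [Algebra κ A]
    (T : Finset A) (hidem : ∀ x ∈ T, IsIdempotentElem x) :
    ∀ x ∈ Algebra.adjoin κ (T : Set A), ∃ y, x * y * x = x := by
  classical
  induction T using Finset.induction_on with
  | empty =>
    intro x hx
    simp only [Finset.coe_empty, Algebra.adjoin_empty, Algebra.mem_bot] at hx
    obtain ⟨r, rfl⟩ := hx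
    by_cases hr : r = 0
    · exact ⟨0, by simp [hr]⟩
    · refine ⟨algebraMap κ A r⁻¹, ?_⟩
      rw [← map_mul, ← map_mul, mul_inv_cancel₀ hr, one_mul]
  | @insert e T he ih =>
    intro x hx
    have hTidem : ∀ a ∈ T, IsIdempotentElem a := fun a ha =>
      hidem a (Finset.mem_insert_of_mem ha)
    have heidem : e * e = e := hidem e (Finset.mem_insert_self e T)
    rw [Finset.coe_insert] at hx
    have h1e : (1 - e) * (1 - e) = 1 - e := by
      rw [mul_sub, mul_one, sub_mul, one_mul, heidem]; ring
    obtain ⟨c1, hc1, hec⟩ := subst_lemma (κ := κ) (T : Set A) e e 1 heidem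
      (Subalgebra.one_mem _) (by rw [heidem, mul_one]) x hx
    obtain ⟨c2, hc2, hec2⟩ := subst_lemma (κ := κ) (T : Set A) e (1 - e) 0 h1e
      (Subalgebra.zero_mem _) (by rw [mul_zero, sub_mul, one_mul, heidem, sub_self]) x hx
    refine reg_of_split heidem ?_ ?_
    · rw [hec]; exact reg_mul_idem heidem (ih hTidem c1 hc1)
    · rw [hec2]; exact reg_mul_idem h1e (ih hTidem c2 hc2)

/-- Every commutative algebra over a field `κ` generated (as an algebra)
by a set of idempotents is von Neumann regular. -/
theorem vonNeumannRegular_of_idempotent_generators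
    {κ A : Type*} [Field κ] [CommRing A] [Algebra κ A]
    (S : Set A) (hidem : ∀ x ∈ S, IsIdempotentElem x)
    (hgen : Algebra.adjoin κ S = ⊤) :
    ∀ x : A, ∃ y : A, x * y * x = x := by
  classical
  intro x
  have hx : x ∈ Algebra.adjoin κ S := hgen ▸ Algebra.mem_top
  -- find a finite subset T of S with x ∈ adjoin κ T
  have key : ∃ T : Finset A, ↑T ⊆ S ∧ x ∈ Algebra.adjoin κ (T : Set A) := by
    induction hx using Algebra.adjoin_induction with
    | mem a ha =>
      exact ⟨{a}, by simpa using ha, Algebra.subset_adjoin (by simp)⟩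
    | algebraMap r =>
      exact ⟨∅, by simp, Subalgebra.algebraMap_mem _ r⟩
    | add a b _ _ iha ihb =>
      obtain ⟨Ta, hTa, ha⟩ := iha
      obtain ⟨Tb, hTb, hb⟩ := ihb
      refine ⟨Ta ∪ Tb, by simp [Set.union_subset_iff, hTa, hTb], ?_⟩
      have h1 : Algebra.adjoin κ (Ta : Set A) ≤ Algebra.adjoin κ ((Ta ∪ Tb : Finset A) : Set A) :=
        Algebra.adjoin_mono (by simp [Finset.coe_union])
      have h2 : Algebra.adjoin κ (Tb : Set A) ≤ Algebra.adjoin κ ((Ta ∪ Tb : Finset A) : Set A) :=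
        Algebra.adjoin_mono (by simp [Finset.coe_union])
      exact add_mem (h1 ha) (h2 hb)
    | mul a b _ _ iha ihb =>
      obtain ⟨Ta, hTa, ha⟩ := iha
      obtain ⟨Tb, hTb, hb⟩ := ihb
      refine ⟨Ta ∪ Tb, by simp [Set.union_subset_iff, hTa, hTb], ?_⟩
      have h1 : Algebra.adjoin κ (Ta : Set A) ≤ Algebra.adjoin κ ((Ta ∪ Tb : Finset A) : Set A) :=
        Algebra.adjoin_mono (by simp [Finset.coe_union])
      have h2 : Algebra.adjoin κ (Tb : Set A) ≤ Algebra.adjoin κ ((Ta ∪ Tb : Finset A) : Set A) :=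
        Algebra.adjoin_mono (by simp [Finset.coe_union])
      exact mul_mem (h1 ha) (h2 hb)
  obtain ⟨T, hTS, hxT⟩ := key
  exact reg_of_finset_adjoin T (fun a ha => hidem a (hTS ha)) x hxT
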